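/- Let F be a finite field, H ⊆ F^n a linear code, f : H → F a quadratic function with f(0) = 0. For each codeword w = ((w_α)_{α∈F}, p) ∈ C(H,f), let c = ∑_{α∈F} w_α and define Φ_w(v) = w + Π^c(v). Then Φ_w maps C(H,f) onto C(H,f) and Φ_w(0) = w; hence C(H,f) is a transitive code. -/
import Mathlib


open Finset

/-- The Vasil'ev–Schönheim code built from a subspace `H ⊆ F^n` and `f : H → F`. -/
def VScode {F : Type*} [Field F] [Fintype F] {n : ℕ}
    (H : Submodule F (Fin n → F)) (f : H → F) :
    Set ((F → (Fin n → F)) × F) :=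
  {x | ∃ hc : (∑ α, x.1 α) ∈ H,
    x.2 = (∑ α : F, α * (∑ j, x.1 α j)) + f ⟨∑ α, x.1 α, hc⟩}

/-- The coefficient of `X i` in `p(X + c) - p(X)`. -/
noncomputable def linCoeff {F : Type*} [Field F] {n : ℕ}
    (p : MvPolynomial (Fin n) F) (c : Fin n → F) (i : Fin n) : F :=
  MvPolynomial.coeff (Finsupp.single i 1)
    ((MvPolynomial.bind₁ (fun j => MvPolynomial.X j + MvPolynomial.C (c j)) p) - p)

/-- `Π^c`: position `j` of block `α` receives the entry of block `α + β_j^c`. -/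
def PiVec {F : Type*} [Field F] {n : ℕ} (b : Fin n → F)
    (x : (F → (Fin n → F)) × F) : (F → (Fin n → F)) × F :=
  (fun α i => x.1 (α + b i) i, x.2)

section Aux

open MvPolynomial

variable {F : Type*} [Field F] {n : ℕ}

private lemma prod_toMultiset_map {M : Type*} [CommMonoid M] (d : Fin n →₀ ℕ) (h : Fin n → M) :
    ((d.toMultiset.map h)).prod = d.prod fun a e => h a ^ e := by
  rw [Finsupp.toMultiset_map, Finsupp.prod_toMultiset]
  exact Finsupp.prod_mapDomain_index (fun a => pow_zero _) (fun a b₁ b₂ => pow_add _ _ _)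

private lemma deg_factor (c : Fin n → F) (i : Fin n) :
    (X i + C (c i) : MvPolynomial (Fin n) F).totalDegree ≤ 1 :=
  (totalDegree_add _ _).trans (by simp [totalDegree_X, totalDegree_C])

private lemma deg_prodS (c : Fin n → F) (s : Multiset (Fin n)) :
    ((s.map fun i => (X i + C (c i) : MvPolynomial (Fin n) F)).prod).totalDegree
      ≤ Multiset.card s := by
  refine (totalDegree_multiset_prod _).trans ?_
  rw [Multiset.map_map]
  refine (Multiset.sum_le_card_nsmul _ 1 ?_).trans (by simp)
  intro x hx
  obtain ⟨i, _, rfl⟩ := Multiset.mem_map.1 hx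
  exact deg_factor c i

private lemma deg_prod_sub (c : Fin n → F) (s : Multiset (Fin n)) :
    ((s.map fun i => (X i + C (c i) : MvPolynomial (Fin n) F)).prod
      - (s.map X).prod).totalDegree ≤ Multiset.card s - 1 := by
  induction s using Multiset.induction with
  | empty => simp
  | cons i t ih =>
      rw [Multiset.map_cons, Multiset.map_cons, Multiset.prod_cons, Multiset.prod_cons]
      have key : (X i + C (c i)) * (t.map fun i => (X i + C (c i) : MvPolynomial (Fin n) F)).prod
            - X i * (t.map X).prod
          = X i * ((t.map fun i => (X i + C (c i) : MvPolynomial (Fin n) F)).prod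
              - (t.map X).prod)
            + C (c i) * (t.map fun i => (X i + C (c i) : MvPolynomial (Fin n) F)).prod := by
        ring
      rw [key]
      refine (totalDegree_add _ _).trans ?_
      simp only [Multiset.card_cons, Nat.add_sub_cancel, max_le_iff]
      constructor
      · rcases Nat.eq_zero_or_pos (Multiset.card t) with h0 | hpos
        · obtain rfl : t = 0 := Multiset.card_eq_zero.1 h0
          simp
        · refine (totalDegree_mul _ _).trans ?_
          rw [totalDegree_X]
          omega
      · refine (totalDegree_mul _ _).trans ?_
        have := deg_prodS c t
        simpa [totalDegree_C] using this

private lemma deg_shift_sub (c : Fin n → F) (p : MvPolynomial (Fin n) F)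
    (hp : p.totalDegree ≤ 2) :
    ((bind₁ (fun j => X j + C (c j)) p) - p).totalDegree ≤ 1 := by
  rw [p.as_sum, map_sum, ← Finset.sum_sub_distrib]
  refine (totalDegree_finset_sum _ _).trans (Finset.sup_le ?_)
  intro v hv
  have hv2 : (v.sum fun _ e => e) ≤ 2 := (le_totalDegree hv).trans hp
  have hcard : Multiset.card v.toMultiset ≤ 2 := by
    rw [Finsupp.card_toMultiset]; exact hv2
  have hb : bind₁ (fun j => X j + C (c j)) (monomial v (coeff v p))
      = C (coeff v p)
        * (v.toMultiset.map fun i => (X i + C (c i) : MvPolynomial (Fin n) F)).prod := by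
    rw [show (bind₁ (fun j => X j + C (c j)) : MvPolynomial (Fin n) F →ₐ[F] _)
        = aeval (fun j => X j + C (c j)) from rfl, aeval_monomial, prod_toMultiset_map]
    rfl
  have hm : (monomial v (coeff v p) : MvPolynomial (Fin n) F)
      = C (coeff v p) * (v.toMultiset.map X).prod := by
    rw [monomial_eq, prod_toMultiset_map]
  calc ((bind₁ (fun j => X j + C (c j)) (monomial v (coeff v p)))
        - monomial v (coeff v p)).totalDegree
      = (C (coeff v p)
          * ((v.toMultiset.map fun i => (X i + C (c i) : MvPolynomial (Fin n) F)).prod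
            - (v.toMultiset.map X).prod)).totalDegree := by rw [hb, hm, ← mul_sub]
    _ ≤ (C (coeff v p) : MvPolynomial (Fin n) F).totalDegree
        + ((v.toMultiset.map fun i => (X i + C (c i) : MvPolynomial (Fin n) F)).prod
            - (v.toMultiset.map X).prod).totalDegree := totalDegree_mul _ _
    _ ≤ 1 := by
        have := deg_prod_sub c v.toMultiset
        rw [totalDegree_C]
        omega

private lemma single_of_sum_le_one {v : Fin n →₀ ℕ} (hv : (v.sum fun _ e => e) ≤ 1) :
    v = 0 ∨ ∃ j, v = Finsupp.single j 1 := by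
  have hcard : Multiset.card v.toMultiset ≤ 1 := by
    rw [Finsupp.card_toMultiset]; exact hv
  rcases Nat.le_one_iff_eq_zero_or_eq_one.1 hcard with h | h
  · left
    have := Multiset.card_eq_zero.1 h
    have h2 := v.toMultiset_toFinsupp
    rw [this] at h2
    simpa using h2.symm
  · right
    obtain ⟨a, ha⟩ := Multiset.card_eq_one.1 h
    refine ⟨a, ?_⟩
    have h2 := v.toMultiset_toFinsupp
    rw [ha, Multiset.toFinsupp_singleton] at h2
    exact h2.symm

private lemma eval_affine (q : MvPolynomial (Fin n) F) (hq : q.totalDegree ≤ 1)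
    (x : Fin n → F) :
    eval x q = coeff 0 q + ∑ j, coeff (Finsupp.single j 1) q * x j := by
  have key : ∀ v ∈ q.support, eval x (monomial v (coeff v q))
      = coeff 0 (monomial v (coeff v q))
        + ∑ j, coeff (Finsupp.single j 1) (monomial v (coeff v q)) * x j := by
    intro v hv
    rcases single_of_sum_le_one ((le_totalDegree hv).trans hq) with rfl | ⟨j, rfl⟩
    · simp only [eval_monomial, coeff_monomial, if_pos rfl, Finsupp.prod_zero_index, mul_one]
      have : ∀ j : Fin n, ((0 : Fin n →₀ ℕ) = Finsupp.single j 1) ↔ False := by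
        intro j
        simp [eq_comm, Finsupp.single_eq_zero]
      simp [this]
    · simp only [eval_monomial, coeff_monomial]
      rw [Finsupp.prod_single_index (by simp)]
      have h0 : (Finsupp.single j 1 : Fin n →₀ ℕ) ≠ 0 := by simp [Finsupp.single_eq_zero]
      rw [if_neg h0]
      have : ∀ j' : Fin n, (Finsupp.single j (1:ℕ) = Finsupp.single j' 1) ↔ (j = j') :=
        fun j' => Finsupp.single_left_inj one_ne_zero
      simp only [this]
      simp [Finset.sum_ite_eq, pow_one]
  rw [q.as_sum]
  simp only [map_sum, coeff_sum, Finset.sum_mul]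
  rw [Finset.sum_comm, ← Finset.sum_add_distrib]
  exact Finset.sum_congr rfl key

private lemma eval_add_eq (p : MvPolynomial (Fin n) F) (hp : p.totalDegree ≤ 2)
    (c d : Fin n → F) :
    eval (c + d) p = eval c p + eval d p - eval 0 p + ∑ j, linCoeff p c j * d j := by
  set q := (bind₁ (fun j => X j + C (c j)) p) - p with hq
  have hdeg := deg_shift_sub c p hp
  have h1 : ∀ y : Fin n → F, eval (c + y) p = eval y p + eval y q := by
    intro y
    have h2 : eval y (bind₁ (fun j => X j + C (c j)) p) = eval (c + y) p := by
      have h3 := eval₂Hom_bind₁ (RingHom.id F) y (fun j => X j + C (c j)) p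
      have h4 : (fun i => eval₂Hom (RingHom.id F) y ((fun j => X j + C (c j)) i)) = c + y := by
        funext i
        simp [add_comm]
      rw [h4] at h3
      exact h3
    rw [hq, map_sub, h2]
    ring
  have h0 : eval (0 : Fin n → F) q = coeff 0 q := by
    have := eval_affine q hdeg 0
    simpa using this
  have hc0 : coeff 0 q = eval c p - eval 0 p := by
    rw [← h0]
    have := h1 0
    rw [add_zero] at this
    rw [this]; ring
  have := h1 d
  rw [eval_affine q hdeg d, hc0] at this
  rw [this]
  have hlin : ∀ j, linCoeff p c j = coeff (Finsupp.single j 1) q := fun j => rfl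
  simp only [hlin]
  ring

end Aux

/-- For `H` linear and `f` quadratic with `f 0 = 0`, each map
`Φ_w : v ↦ w + Π^c(v)` (with `c = ∑_α w_α`) maps `C(H,f)` onto itself and sends
`0` to `w`; hence `C(H,f)` is a transitive code. -/
theorem stmt9 {F : Type*} [Field F] [Fintype F] {n : ℕ}
    (H : Submodule F (Fin n → F)) (f : H → F)
    (p : MvPolynomial (Fin n) F) (hp : p.totalDegree ≤ 2)
    (hf : ∀ x : H, f x = MvPolynomial.eval (x : Fin n → F) p)
    (hf0 : f 0 = 0) :
    ∀ w ∈ VScode H f,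
      (fun v => w + PiVec (linCoeff p (∑ α, w.1 α)) v) '' VScode H f
        = VScode H f ∧
      w + PiVec (linCoeff p (∑ α, w.1 α)) 0 = w := by
  intro w hw
  obtain ⟨hc, hw2⟩ := hw
  set c : Fin n → F := ∑ α, w.1 α with hcdef
  set b : Fin n → F := linCoeff p c with hbdef
  have hzero : MvPolynomial.eval (0 : Fin n → F) p = 0 := by
    have h := hf 0
    rw [hf0] at h
    simpa using h.symm
  have keyf : ∀ (d : Fin n → F) (hd : d ∈ H),
      f ⟨c + d, H.add_mem hc hd⟩ = f ⟨c, hc⟩ + f ⟨d, hd⟩ + ∑ j, b j * d j := by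
    intro d hd
    rw [hf ⟨c + d, H.add_mem hc hd⟩, hf ⟨c, hc⟩, hf ⟨d, hd⟩]
    show MvPolynomial.eval (c + d) p = MvPolynomial.eval c p + MvPolynomial.eval d p
      + ∑ j, b j * d j
    rw [eval_add_eq p hp c d, hzero]
    ring
  have memVS : ∀ (x : (F → (Fin n → F)) × F) (S : Fin n → F) (hS : S ∈ H),
      (∑ α, x.1 α) = S →
      x.2 = (∑ α : F, α * ∑ j, x.1 α j) + f ⟨S, hS⟩ → x ∈ VScode H f := by
    intro x S hS h1 h2
    subst h1
    exact ⟨hS, h2⟩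
  have shift_sum : ∀ (y : F → F) (β : F),
      ∑ α : F, α * y (α + β) = (∑ α : F, α * y α) - β * ∑ α : F, y α := by
    intro y β
    have h := Equiv.sum_comp (Equiv.addRight β) (fun α => (α - β) * y α)
    simp only [Equiv.coe_addRight, add_sub_cancel_right] at h
    rw [h]
    simp [sub_mul, Finset.sum_sub_distrib, Finset.mul_sum]
  have shift_sum' : ∀ (y : F → F) (β : F),
      ∑ α : F, α * y (α - β) = (∑ α : F, α * y α) + β * ∑ α : F, y α := by
    intro y β
    have h := Equiv.sum_comp (Equiv.subRight β) (fun α => (α + β) * y α)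
    simp only [Equiv.subRight_apply, sub_add_cancel] at h
    rw [h]
    simp [add_mul, Finset.sum_add_distrib, Finset.mul_sum]
  have reindex : ∀ (g : F → F) (β : F), ∑ α : F, g (α + β) = ∑ α : F, g α := by
    intro g β
    exact Equiv.sum_comp (Equiv.addRight β) g
  have reindex' : ∀ (g : F → F) (β : F), ∑ α : F, g (α - β) = ∑ α : F, g α := by
    intro g β
    exact Equiv.sum_comp (Equiv.subRight β) g
  have mem1 : ∀ v ∈ VScode H f, w + PiVec b v ∈ VScode H f := by
    intro v hv
    obtain ⟨hd, hv2⟩ := hv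
    set d : Fin n → F := ∑ α, v.1 α with hddef
    have hd_apply : ∀ j, d j = ∑ α, v.1 α j := by
      intro j; rw [hddef]; exact Finset.sum_apply j _ _
    have hsum : ∑ α, (w + PiVec b v).1 α = c + d := by
      simp only [Prod.fst_add, Pi.add_apply, PiVec]
      rw [Finset.sum_add_distrib]
      congr 1
      funext i
      rw [Finset.sum_apply, hd_apply i]
      exact reindex (fun α => v.1 α i) (b i)
    refine memVS _ (c + d) (H.add_mem hc hd) hsum ?_
    have hmid : ∑ α : F, α * ∑ j, (w + PiVec b v).1 α j
        = (∑ α : F, α * ∑ j, w.1 α j) + ((∑ α : F, α * ∑ j, v.1 α j) - ∑ j, b j * d j) := by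
      calc ∑ α : F, α * ∑ j, (w + PiVec b v).1 α j
          = ∑ α : F, (α * ∑ j, w.1 α j + ∑ j, α * v.1 (α + b j) j) := by
            refine Finset.sum_congr rfl fun α _ => ?_
            simp only [Prod.fst_add, Pi.add_apply, PiVec]
            rw [Finset.sum_add_distrib, mul_add]
            congr 1
            rw [Finset.mul_sum]
        _ = (∑ α : F, α * ∑ j, w.1 α j) + ∑ j, ∑ α : F, α * v.1 (α + b j) j := by
            rw [Finset.sum_add_distrib, Finset.sum_comm]
        _ = (∑ α : F, α * ∑ j, w.1 α j)
            + ∑ j, ((∑ α : F, α * v.1 α j) - b j * d j) := by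
            congr 1
            refine Finset.sum_congr rfl fun j _ => ?_
            rw [shift_sum (fun β => v.1 β j) (b j), hd_apply j]
        _ = (∑ α : F, α * ∑ j, w.1 α j)
            + ((∑ α : F, α * ∑ j, v.1 α j) - ∑ j, b j * d j) := by
            rw [Finset.sum_sub_distrib]
            congr 2
            rw [Finset.sum_comm]
            exact Finset.sum_congr rfl fun α _ => (Finset.mul_sum _ _ _).symm
    rw [hmid, keyf d hd]
    show w.2 + v.2 = _
    rw [hw2, hv2]
    ring
  have mem2 : ∀ u ∈ VScode H f, PiVec (fun i => -(b i)) (u - w) ∈ VScode H f := by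
    intro u hu
    obtain ⟨he, hu2⟩ := hu
    set e : Fin n → F := ∑ α, u.1 α with hedef
    have he_apply : ∀ j, e j = ∑ α, u.1 α j := by
      intro j; rw [hedef]; exact Finset.sum_apply j _ _
    have hc_apply : ∀ j, c j = ∑ α, w.1 α j := by
      intro j; rw [hcdef]; exact Finset.sum_apply j _ _
    have hv1 : ∀ α i, (PiVec (fun i => -(b i)) (u - w)).1 α i
        = u.1 (α - b i) i - w.1 (α - b i) i := by
      intro α i
      show (u - w).1 (α + -(b i)) i = _
      rw [← sub_eq_add_neg]
      rfl
    have hsum : ∑ α, (PiVec (fun i => -(b i)) (u - w)).1 α = e - c := by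
      funext i
      rw [Finset.sum_apply]
      calc ∑ α : F, (PiVec (fun i => -(b i)) (u - w)).1 α i
          = ∑ α : F, (u.1 (α - b i) i - w.1 (α - b i) i) :=
            Finset.sum_congr rfl fun α _ => hv1 α i
        _ = ∑ α : F, (u.1 α i - w.1 α i) :=
            reindex' (fun α => u.1 α i - w.1 α i) (b i)
        _ = e i - c i := by
            rw [Finset.sum_sub_distrib, he_apply, hc_apply]
        _ = (e - c) i := rfl
    refine memVS _ (e - c) (H.sub_mem he hc) hsum ?_
    have hfe : f ⟨e - c, H.sub_mem he hc⟩
        = f ⟨e, he⟩ - f ⟨c, hc⟩ - ∑ j, b j * (e - c) j := by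
      have h := keyf (e - c) (H.sub_mem he hc)
      rw [show (⟨c + (e - c), H.add_mem hc (H.sub_mem he hc)⟩ : H) = ⟨e, he⟩ from
        Subtype.ext (by funext i; simp)] at h
      rw [h]; ring
    have hmid : ∑ α : F, α * ∑ j, (PiVec (fun i => -(b i)) (u - w)).1 α j
        = ((∑ α : F, α * ∑ j, u.1 α j) - (∑ α : F, α * ∑ j, w.1 α j))
          + ∑ j, b j * (e - c) j := by
      calc ∑ α : F, α * ∑ j, (PiVec (fun i => -(b i)) (u - w)).1 α j
          = ∑ j, ∑ α : F, α * (u.1 (α - b j) j - w.1 (α - b j) j) := by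
            rw [← Finset.sum_comm]
            refine Finset.sum_congr rfl fun α _ => ?_
            rw [Finset.mul_sum]
            exact Finset.sum_congr rfl fun j _ => by rw [hv1]
        _ = ∑ j, ((∑ α : F, α * (u.1 α j - w.1 α j)) + b j * ∑ α : F, (u.1 α j - w.1 α j)) := by
            refine Finset.sum_congr rfl fun j _ => ?_
            exact shift_sum' (fun β => u.1 β j - w.1 β j) (b j)
        _ = ((∑ α : F, α * ∑ j, u.1 α j) - (∑ α : F, α * ∑ j, w.1 α j))
            + ∑ j, b j * (e - c) j := by
            rw [Finset.sum_add_distrib]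
            congr 1
            · rw [Finset.sum_comm, ← Finset.sum_sub_distrib]
              refine Finset.sum_congr rfl fun α _ => ?_
              rw [Finset.mul_sum, Finset.mul_sum, ← Finset.sum_sub_distrib]
              exact Finset.sum_congr rfl fun j _ => mul_sub _ _ _
            · refine Finset.sum_congr rfl fun j _ => ?_
              rw [Finset.sum_sub_distrib, ← he_apply, ← hc_apply]
              rfl
    rw [hmid, hfe]
    show u.2 - w.2 = _
    rw [hu2, hw2]
    ring
  constructor
  · ext u
    constructor
    · rintro ⟨v, hv, rfl⟩
      exact mem1 v hv
    · intro hu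
      refine ⟨PiVec (fun i => -(b i)) (u - w), mem2 u hu, ?_⟩
      show w + PiVec b (PiVec (fun i => -(b i)) (u - w)) = u
      have hinv : PiVec b (PiVec (fun i => -(b i)) (u - w)) = u - w := by
        refine Prod.ext ?_ rfl
        funext α i
        show (u - w).1 (α + b i + -(b i)) i = (u - w).1 α i
        rw [add_neg_cancel_right]
      rw [hinv]
      abel
  · show w + PiVec b 0 = w
    have h0 : PiVec b (0 : (F → (Fin n → F)) × F) = 0 := rfl
    rw [h0, add_zero]
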